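/- arXiv:2209.10046 — 3 statements merged into one kernel-verified Lean document; each statement's English description precedes it below -/
import Mathlib

section
/- Let c > 0 and T > 0. The following are equivalent: (1) μ_N(D_x f(t, x, u)) ≤ −c for all t ∈ [0,T], x ∈ ℝⁿ, and u ∈ U (the system ẋ = f(t,x,u) is strongly infinitesimally contracting with rate c with respect to N); (2) for every choice of nominal trajectory x : [0,T] → ℝⁿ and input u : [0,T] → U, the time-reversed adjoint system Λ̇(t) = D_x f(T−t, x(T−t), u(T−t))ᵀ Λ(t) − v(T−t), obtained from the adjoint λ̇(t) = −D_x f(t, x(t), u(t))ᵀ λ(t) − v(t) by setting Λ(t) = λ(T−t), satisfies μ_{N⋆}(D_Λ(vector field)) ≤ −c at every time, i.e., is strongly infinitesimally contracting with rate c with respect to the dual norm N⋆. -/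
open Set Filter Matrix MeasureTheory intervalIntegral Topology

/-- `N` is a norm on `ℝ^m`. -/
structure IsNorm {m : ℕ} (N : (Fin m → ℝ) → ℝ) : Prop where
  nonneg : ∀ x, 0 ≤ N x
  eq_zero_iff : ∀ x, N x = 0 ↔ x = 0
  smul : ∀ (a : ℝ) (x : Fin m → ℝ), N (a • x) = |a| * N x
  triangle : ∀ x y, N (x + y) ≤ N x + N y

/-- The dual norm `N⋆(y) = sup {yᵀx : N x ≤ 1}`. -/
noncomputable def dualNorm {m : ℕ} (N : (Fin m → ℝ) → ℝ) (y : Fin m → ℝ) : ℝ :=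
  sSup {r | ∃ x, N x ≤ 1 ∧ r = y ⬝ᵥ x}

/-- The induced matrix norm `‖A‖_N = sup {N (A x) : N x = 1}`. -/
noncomputable def inducedNorm {m : ℕ} (N : (Fin m → ℝ) → ℝ)
    (A : Matrix (Fin m) (Fin m) ℝ) : ℝ :=
  sSup {r | ∃ x, N x = 1 ∧ r = N (A.mulVec x)}

/-- The logarithmic norm `μ_N(A) = lim_{h→0⁺} (‖I + hA‖_N − 1)/h`. -/
noncomputable def logNorm {m : ℕ} (N : (Fin m → ℝ) → ℝ)
    (A : Matrix (Fin m) (Fin m) ℝ) : ℝ :=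
  limUnder (𝓝[>] (0:ℝ)) (fun h : ℝ => (inducedNorm N (1 + h • A) - 1) / h)



section Aux

open Metric

variable {n : ℕ} {N : (Fin n → ℝ) → ℝ}

lemma IsNorm.zero (hN : IsNorm N) : N 0 = 0 := (hN.eq_zero_iff 0).2 rfl

lemma IsNorm.neg' (hN : IsNorm N) (x : Fin n → ℝ) : N (-x) = N x := by
  have := hN.smul (-1) x; simpa using this

lemma IsNorm.pos (hN : IsNorm N) {x : Fin n → ℝ} (hx : x ≠ 0) : 0 < N x :=
  lt_of_le_of_ne (hN.nonneg x) (fun h => hx ((hN.eq_zero_iff x).1 h.symm))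

/-- upper sandwich -/
lemma IsNorm.le_norm (hN : IsNorm N) : ∃ b : ℝ, 0 < b ∧ ∀ x, N x ≤ b * ‖x‖ := by
  have hsnn : (0:ℝ) ≤ ∑ i : Fin n, N (Pi.single i (1:ℝ)) :=
    Finset.sum_nonneg fun i _ => hN.nonneg _
  refine ⟨(∑ i : Fin n, N (Pi.single i (1:ℝ))) + 1, by linarith, fun x => ?_⟩
  have hx : x = ∑ i : Fin n, x i • (Pi.single i (1:ℝ) : Fin n → ℝ) := by
    ext j; simp [Pi.single_apply, Finset.sum_ite_eq', mul_comm]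
  calc N x = N (∑ i : Fin n, x i • (Pi.single i (1:ℝ) : Fin n → ℝ)) := by rw [← hx]
    _ ≤ ∑ i : Fin n, N (x i • (Pi.single i (1:ℝ) : Fin n → ℝ)) := by
        classical
        refine Finset.le_sum_of_subadditive N hN.zero.le hN.triangle _ _
    _ = ∑ i : Fin n, |x i| * N (Pi.single i (1:ℝ)) := by simp [hN.smul]
    _ ≤ ∑ i : Fin n, ‖x‖ * N (Pi.single i (1:ℝ)) := by
        refine Finset.sum_le_sum fun i _ => ?_
        exact mul_le_mul_of_nonneg_right (by simpa using norm_le_pi_norm x i) (hN.nonneg _)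
    _ = (∑ i : Fin n, N (Pi.single i (1:ℝ))) * ‖x‖ := by
        rw [Finset.sum_mul]; exact Finset.sum_congr rfl fun i _ => mul_comm _ _
    _ ≤ ((∑ i : Fin n, N (Pi.single i (1:ℝ))) + 1) * ‖x‖ := by
        have : (0:ℝ) ≤ ‖x‖ := norm_nonneg x
        nlinarith [Finset.sum_nonneg (fun i (_ : i ∈ Finset.univ) => hN.nonneg (Pi.single i (1:ℝ)))]

lemma IsNorm.continuous (hN : IsNorm N) : Continuous N := by
  obtain ⟨b, hb, hble⟩ := hN.le_norm
  have lip : LipschitzWith (Real.toNNReal b) N := by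
    refine LipschitzWith.of_dist_le_mul fun x y => ?_
    have h1 : N x - N y ≤ N (x - y) := by
      have := hN.triangle (x - y) y; simpa using this
    have h2 : N y - N x ≤ N (x - y) := by
      have := hN.triangle (y - x) x
      have hnn : N (y - x) = N (x - y) := by rw [← hN.neg' (x-y)]; ring_nf
      simp [hnn] at this; linarith
    have : |N x - N y| ≤ N (x - y) := abs_sub_le_iff.2 ⟨h1, h2⟩
    calc dist (N x) (N y) = |N x - N y| := rfl
      _ ≤ N (x - y) := this
      _ ≤ b * ‖x - y‖ := hble _
      _ = (Real.toNNReal b) * dist x y := by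
          rw [dist_eq_norm]; simp [Real.coe_toNNReal b hb.le]
  exact lip.continuous

lemma IsNorm.norm_le (hN : IsNorm N) : ∃ a : ℝ, 0 < a ∧ ∀ x, a * ‖x‖ ≤ N x := by
  rcases Nat.eq_zero_or_pos n with hn | hn
  · refine ⟨1, one_pos, fun x => ?_⟩
    subst hn
    have h0 : x = 0 := funext fun i => i.elim0
    rw [h0, hN.zero, norm_zero, mul_zero]
  · have hne : (sphere (0 : Fin n → ℝ) 1).Nonempty := by
      have : Nontrivial (Fin n → ℝ) := by
        have : 0 < n := hn
        exact ⟨Pi.single ⟨0, this⟩ 1, 0, by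
          intro h
          have := congrFun h ⟨0, this⟩
          simp at this⟩
      exact NormedSpace.sphere_nonempty.2 zero_le_one
    obtain ⟨x₀, hx₀m, hx₀min⟩ := (isCompact_sphere (0 : Fin n → ℝ) 1).exists_isMinOn hne
      (hN.continuous.continuousOn)
    have hx₀ : ‖x₀‖ = 1 := by simpa using hx₀m
    have hx₀ne : x₀ ≠ 0 := by intro h; rw [h] at hx₀; simp at hx₀
    refine ⟨N x₀, hN.pos hx₀ne, fun x => ?_⟩
    rcases eq_or_ne x 0 with rfl | hx
    · simp [hN.zero]
    · have hxn : 0 < ‖x‖ := norm_pos_iff.2 hx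
      have hmem : ‖x‖⁻¹ • x ∈ sphere (0 : Fin n → ℝ) 1 := by
        simp [norm_smul, abs_of_pos (inv_pos.2 hxn), inv_mul_cancel₀ hxn.ne']
      have := hx₀min hmem
      have heq : N (‖x‖⁻¹ • x) = ‖x‖⁻¹ * N x := by
        rw [hN.smul]; congr 1; exact abs_of_pos (inv_pos.2 hxn)
      have h2 : N x₀ ≤ ‖x‖⁻¹ * N x := heq ▸ this
      calc N x₀ * ‖x‖ ≤ (‖x‖⁻¹ * N x) * ‖x‖ := by nlinarith
        _ = N x := by field_simp



lemma dot_le (y x : Fin n → ℝ) : y ⬝ᵥ x ≤ (n:ℝ) * ‖y‖ * ‖x‖ := by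
  calc y ⬝ᵥ x = ∑ i, y i * x i := rfl
    _ ≤ ∑ i, |y i * x i| := Finset.sum_le_sum fun i _ => le_abs_self _
    _ ≤ ∑ _i : Fin n, ‖y‖ * ‖x‖ := by
        refine Finset.sum_le_sum fun i _ => ?_
        rw [abs_mul]
        exact mul_le_mul (by simpa using norm_le_pi_norm y i)
          (by simpa using norm_le_pi_norm x i) (abs_nonneg _) (norm_nonneg _)
    _ = (n:ℝ) * ‖y‖ * ‖x‖ := by simp [Finset.sum_const, mul_assoc]

lemma dual_mem_zero (hN : IsNorm N) (y : Fin n → ℝ) :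
    (0:ℝ) ∈ {r | ∃ x, N x ≤ 1 ∧ r = y ⬝ᵥ x} :=
  ⟨0, by simp [hN.zero], by simp⟩

lemma dual_bddAbove (hN : IsNorm N) (y : Fin n → ℝ) :
    BddAbove {r | ∃ x, N x ≤ 1 ∧ r = y ⬝ᵥ x} := by
  obtain ⟨a, ha, hale⟩ := hN.norm_le
  refine ⟨(n:ℝ) * ‖y‖ * a⁻¹, fun r ⟨x, hx, hr⟩ => ?_⟩
  have hxa : ‖x‖ ≤ a⁻¹ := by
    have h1 := hale x
    nlinarith [norm_nonneg x, mul_inv_cancel₀ ha.ne']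
  calc r = y ⬝ᵥ x := hr
    _ ≤ (n:ℝ) * ‖y‖ * ‖x‖ := dot_le y x
    _ ≤ (n:ℝ) * ‖y‖ * a⁻¹ := by
        refine mul_le_mul_of_nonneg_left hxa (by positivity)

lemma dual_nonneg (hN : IsNorm N) (y : Fin n → ℝ) : 0 ≤ dualNorm N y :=
  le_csSup (dual_bddAbove hN y) (dual_mem_zero hN y)

lemma pairing (hN : IsNorm N) (y z : Fin n → ℝ) : y ⬝ᵥ z ≤ dualNorm N y * N z := by
  rcases eq_or_ne z 0 with rfl | hz
  · simp [hN.zero]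
  · have hz' : 0 < N z := hN.pos hz
    have hmem : y ⬝ᵥ ((N z)⁻¹ • z) ∈ {r | ∃ x, N x ≤ 1 ∧ r = y ⬝ᵥ x} :=
      ⟨(N z)⁻¹ • z, by
        rw [hN.smul, abs_of_pos (inv_pos.2 hz'), inv_mul_cancel₀ hz'.ne'], rfl⟩
    have hle := le_csSup (dual_bddAbove hN y) hmem
    have hdot : y ⬝ᵥ ((N z)⁻¹ • z) = (N z)⁻¹ * (y ⬝ᵥ z) := by
      simp [dotProduct_smul, smul_eq_mul]
    rw [hdot] at hle
    calc y ⬝ᵥ z = N z * ((N z)⁻¹ * (y ⬝ᵥ z)) := by field_simp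
      _ ≤ N z * dualNorm N y := by exact mul_le_mul_of_nonneg_left hle hz'.le
      _ = dualNorm N y * N z := mul_comm _ _

lemma dual_zero (hN : IsNorm N) : dualNorm N (0 : Fin n → ℝ) = 0 := by
  have : {r | ∃ x, N x ≤ 1 ∧ r = (0 : Fin n → ℝ) ⬝ᵥ x} = {0} := by
    ext r
    simp only [Set.mem_setOf_eq, Set.mem_singleton_iff, zero_dotProduct]
    exact ⟨fun ⟨x, _, h⟩ => h, fun h => ⟨0, by simp [hN.zero], h⟩⟩
  rw [dualNorm, this, csSup_singleton]

lemma dual_smul_le (hN : IsNorm N) (a : ℝ) (y : Fin n → ℝ) :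
    dualNorm N (a • y) ≤ |a| * dualNorm N y := by
  refine Real.sSup_le (fun r hr => ?_) (mul_nonneg (abs_nonneg a) (dual_nonneg hN y))
  obtain ⟨x, hx, rfl⟩ := hr
  set x' : Fin n → ℝ := if 0 ≤ a then x else -x with hx'
  have hNx' : N x' ≤ 1 := by
    rw [hx']; split
    · exact hx
    · rw [hN.neg']; exact hx
  have key : (a • y) ⬝ᵥ x = |a| * (y ⬝ᵥ x') := by
    rw [hx', smul_dotProduct]
    rcases le_or_gt 0 a with h | h
    · rw [if_pos h, abs_of_nonneg h]; rfl
    · rw [if_neg (not_le.2 h), abs_of_neg h, dotProduct_neg]; ring_nf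
  rw [key]
  exact mul_le_mul_of_nonneg_left (le_csSup (dual_bddAbove hN y) ⟨x', hNx', rfl⟩)
    (abs_nonneg a)

lemma dual_isNorm (hN : IsNorm N) : IsNorm (dualNorm N) := by
  refine ⟨dual_nonneg hN, fun y => ⟨fun h0 => ?_, fun h => by rw [h, dual_zero hN]⟩,
    fun a y => ?_, fun y z => ?_⟩
  · have hz : ∀ z, y ⬝ᵥ z = 0 := by
      intro z
      have h1 := pairing hN y z
      have h2 := pairing hN y (-z)
      rw [hN.neg', dotProduct_neg] at h2
      rw [h0, zero_mul] at h1 h2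
      linarith
    exact dotProduct_self_eq_zero.1 (hz y)
  · rcases eq_or_ne a 0 with rfl | ha
    · simp [dual_zero hN]
    · refine le_antisymm (dual_smul_le hN a y) ?_
      have h2 := dual_smul_le hN a⁻¹ (a • y)
      rw [smul_smul, inv_mul_cancel₀ ha, one_smul, abs_inv] at h2
      have haa : 0 < |a| := abs_pos.2 ha
      calc |a| * dualNorm N y ≤ |a| * (|a|⁻¹ * dualNorm N (a • y)) :=
            mul_le_mul_of_nonneg_left h2 haa.le
        _ = dualNorm N (a • y) := by field_simp
  · refine Real.sSup_le (fun r hr => ?_)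
      (add_nonneg (dual_nonneg hN y) (dual_nonneg hN z))
    obtain ⟨x, hx, rfl⟩ := hr
    rw [add_dotProduct]
    exact add_le_add (le_csSup (dual_bddAbove hN y) ⟨x, hx, rfl⟩)
      (le_csSup (dual_bddAbove hN z) ⟨x, hx, rfl⟩)

def WithNorm (n : ℕ) (_N : (Fin n → ℝ) → ℝ) : Type := Fin n → ℝ

instance : AddCommGroup (WithNorm n N) := inferInstanceAs (AddCommGroup (Fin n → ℝ))
noncomputable instance : Module ℝ (WithNorm n N) := inferInstanceAs (Module ℝ (Fin n → ℝ))

/-- The identity map into the synonym. -/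
def toW {n : ℕ} {N : (Fin n → ℝ) → ℝ} (z : Fin n → ℝ) : WithNorm n N := z

@[reducible] noncomputable def withNormGroup (hN : IsNorm N) : NormedAddCommGroup (WithNorm n N) :=
  AddGroupNorm.toNormedAddCommGroup
    { toFun := fun z : WithNorm n N => N z
      map_zero' := hN.zero
      add_le' := hN.triangle
      neg' := hN.neg'
      eq_zero_of_map_eq_zero' := fun x h => (hN.eq_zero_iff x).1 h }

lemma exists_dual_vec (hN : IsNorm N) (x : Fin n → ℝ) :
    ∃ y : Fin n → ℝ, dualNorm N y ≤ 1 ∧ y ⬝ᵥ x = N x := by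
  rcases eq_or_ne x 0 with rfl | hx
  · exact ⟨0, by rw [dual_zero hN]; exact zero_le_one, by simp [hN.zero]⟩
  · letI := withNormGroup hN
    letI : NormedSpace ℝ (WithNorm n N) :=
      { (inferInstance : Module ℝ (WithNorm n N)) with
        norm_smul_le := fun a z => by
          show N (a • z) ≤ ‖a‖ * N z
          exact le_of_eq (by rw [Real.norm_eq_abs]; exact hN.smul a z) }
    have hx' : toW (N := N) x ≠ 0 := hx
    obtain ⟨g, hg1, hgx⟩ := exists_dual_vector (𝕜 := ℝ) (E := WithNorm n N) (toW x) (norm_ne_zero_iff.2 hx')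
    set e : Fin n → WithNorm n N := fun i => toW (Pi.single i (1:ℝ)) with he
    set y : Fin n → ℝ := fun i => g (e i) with hy
    have hdot : ∀ z : Fin n → ℝ, y ⬝ᵥ z = g (toW z) := by
      intro z
      have hz : toW (N := N) z = ∑ i : Fin n, z i • e i := by
        show z = ∑ i : Fin n, z i • (Pi.single i (1:ℝ) : Fin n → ℝ)
        ext j; simp [Pi.single_apply, Finset.sum_ite_eq', mul_comm]
      rw [hz, map_sum]
      refine Finset.sum_congr rfl fun i _ => ?_
      rw [g.map_smul, smul_eq_mul, hy, mul_comm]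
    have hnorm : ∀ z : Fin n → ℝ, ‖toW (N := N) z‖ = N z := fun _ => rfl
    refine ⟨y, ?_, ?_⟩
    · refine Real.sSup_le (fun r hr => ?_) zero_le_one
      obtain ⟨z, hz, rfl⟩ := hr
      rw [hdot z]
      calc g (toW z) ≤ |g (toW z)| := le_abs_self _
        _ = ‖g (toW z)‖ := (Real.norm_eq_abs _).symm
        _ ≤ ‖g‖ * ‖toW (N := N) z‖ := g.le_opNorm _
        _ = N z := by rw [hg1, one_mul, hnorm]
        _ ≤ 1 := hz
    · rw [hdot x]
      have h2 : g (toW x) = ‖toW (N := N) x‖ := by simpa using hgx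
      rw [h2, hnorm]

lemma induced_bddAbove (hP : IsNorm N) (A : Matrix (Fin n) (Fin n) ℝ) :
    BddAbove {r | ∃ x, N x = 1 ∧ r = N (A.mulVec x)} := by
  obtain ⟨a, ha, hale⟩ := hP.norm_le
  obtain ⟨b, hb, hble⟩ := hP.le_norm
  set L := LinearMap.toContinuousLinearMap (Matrix.mulVecLin A)
  refine ⟨b * ‖L‖ * a⁻¹, fun r ⟨x, hx, hr⟩ => ?_⟩
  have hxa : ‖x‖ ≤ a⁻¹ := by
    have h1 := hale x
    rw [hx] at h1
    nlinarith [norm_nonneg x, mul_inv_cancel₀ ha.ne']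
  have hLx : A.mulVec x = L x := rfl
  calc r = N (A.mulVec x) := hr
    _ ≤ b * ‖A.mulVec x‖ := hble _
    _ = b * ‖L x‖ := by rw [hLx]
    _ ≤ b * (‖L‖ * ‖x‖) := mul_le_mul_of_nonneg_left (L.le_opNorm x) hb.le
    _ ≤ b * (‖L‖ * a⁻¹) := by
        refine mul_le_mul_of_nonneg_left ?_ hb.le
        exact mul_le_mul_of_nonneg_left hxa (norm_nonneg L)
    _ = b * ‖L‖ * a⁻¹ := by ring

lemma induced_nonneg (hP : IsNorm N) (A : Matrix (Fin n) (Fin n) ℝ) :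
    0 ≤ inducedNorm N A :=
by
  refine Real.sSup_nonneg fun r hr => ?_
  obtain ⟨x, _, rfl⟩ := hr
  exact hP.nonneg _

lemma induced_bound (hP : IsNorm N) (A : Matrix (Fin n) (Fin n) ℝ) (x : Fin n → ℝ) :
    N (A.mulVec x) ≤ inducedNorm N A * N x := by
  rcases eq_or_ne x 0 with rfl | hx
  · simp [Matrix.mulVec_zero, hP.zero]
  · have hc : 0 < N x := hP.pos hx
    have hmem : N (A.mulVec ((N x)⁻¹ • x)) ∈ {r | ∃ z, N z = 1 ∧ r = N (A.mulVec z)} :=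
      ⟨(N x)⁻¹ • x, by rw [hP.smul, abs_of_pos (inv_pos.2 hc), inv_mul_cancel₀ hc.ne'], rfl⟩
    have hle := le_csSup (induced_bddAbove hP A) hmem
    have heq : N (A.mulVec ((N x)⁻¹ • x)) = (N x)⁻¹ * N (A.mulVec x) := by
      rw [Matrix.mulVec_smul, hP.smul, abs_of_pos (inv_pos.2 hc)]
    rw [heq] at hle
    calc N (A.mulVec x) = N x * ((N x)⁻¹ * N (A.mulVec x)) := by field_simp
      _ ≤ N x * inducedNorm N A := mul_le_mul_of_nonneg_left hle hc.le
      _ = inducedNorm N A * N x := mul_comm _ _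

lemma dot_swap (A : Matrix (Fin n) (Fin n) ℝ) (y x : Fin n → ℝ) :
    (Aᵀ.mulVec y) ⬝ᵥ x = y ⬝ᵥ (A.mulVec x) := by
  rw [Matrix.mulVec_transpose, ← Matrix.dotProduct_mulVec]

lemma inducedNorm_transpose (hN : IsNorm N) (A : Matrix (Fin n) (Fin n) ℝ) :
    inducedNorm (dualNorm N) Aᵀ = inducedNorm N A := by
  have hD := dual_isNorm hN
  apply le_antisymm
  · refine Real.sSup_le (fun r hr => ?_) (induced_nonneg hN A)
    obtain ⟨y, hy, rfl⟩ := hr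
    refine Real.sSup_le (fun s hs => ?_) (induced_nonneg hN A)
    obtain ⟨x, hx, rfl⟩ := hs
    calc (Aᵀ.mulVec y) ⬝ᵥ x = y ⬝ᵥ (A.mulVec x) := dot_swap A y x
      _ ≤ dualNorm N y * N (A.mulVec x) := pairing hN y _
      _ = N (A.mulVec x) := by rw [hy, one_mul]
      _ ≤ inducedNorm N A * N x := induced_bound hN A x
      _ ≤ inducedNorm N A * 1 := mul_le_mul_of_nonneg_left hx (induced_nonneg hN A)
      _ = inducedNorm N A := mul_one _
  · refine Real.sSup_le (fun r hr => ?_) (induced_nonneg hD Aᵀ)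
    obtain ⟨x, hx, rfl⟩ := hr
    obtain ⟨y, hy1, hyx⟩ := exists_dual_vec hN (A.mulVec x)
    calc N (A.mulVec x) = y ⬝ᵥ A.mulVec x := hyx.symm
      _ = (Aᵀ.mulVec y) ⬝ᵥ x := (dot_swap A y x).symm
      _ ≤ dualNorm N (Aᵀ.mulVec y) * N x := pairing hN _ x
      _ = dualNorm N (Aᵀ.mulVec y) := by rw [hx, mul_one]
      _ ≤ inducedNorm (dualNorm N) Aᵀ * dualNorm N y := induced_bound hD Aᵀ y
      _ ≤ inducedNorm (dualNorm N) Aᵀ :=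
          mul_le_of_le_one_right (induced_nonneg hD Aᵀ) hy1

lemma logNorm_transpose (hN : IsNorm N) (A : Matrix (Fin n) (Fin n) ℝ) :
    logNorm (dualNorm N) Aᵀ = logNorm N A := by
  unfold logNorm
  congr 1
  funext h
  rw [show (1 : Matrix (Fin n) (Fin n) ℝ) + h • Aᵀ = (1 + h • A)ᵀ by
      rw [Matrix.transpose_add, Matrix.transpose_one, Matrix.transpose_smul],
    inducedNorm_transpose hN]

end Aux

/-- **Dual contractivity of state and time-reversed costate** (Theorem 2).
For `c > 0` and `T > 0`, the following are equivalent: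
(1) `μ_N(D_x f(t,x,u)) ≤ −c` for all `t ∈ [0,T]`, `x ∈ ℝⁿ`, `u ∈ U`, i.e. the
system `ẋ = f(t,x,u)` is strongly infinitesimally contracting with rate `c`
with respect to `N`;
(2) for every nominal trajectory `x : [0,T] → ℝⁿ` and input `u : [0,T] → U`, the
time-reversed adjoint system
`Λ̇(t) = D_x f(T−t, x(T−t), u(T−t))ᵀ Λ(t) − v(T−t)` — whose Jacobian with respect
to `Λ` is `D_x f(T−t, x(T−t), u(T−t))ᵀ` — is strongly infinitesimally contracting
with rate `c` with respect to the dual norm `N⋆` at every `t ∈ [0,T]`. -/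
theorem dual_contractivity_state_costate
    {n k : ℕ} (T c : ℝ) (hT : 0 < T) (hc : 0 < c)
    (N : (Fin n → ℝ) → ℝ) (hN : IsNorm N)
    (U : Set (Fin k → ℝ))
    (f : ℝ → (Fin n → ℝ) → (Fin k → ℝ) → (Fin n → ℝ))
    (hf_cont : Continuous fun p : ℝ × (Fin n → ℝ) × (Fin k → ℝ) => f p.1 p.2.1 p.2.2)
    (Df : ℝ → (Fin n → ℝ) → (Fin k → ℝ) → Matrix (Fin n) (Fin n) ℝ)
    (hDf : ∀ t x u, HasFDerivAt (fun y => f t y u)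
      (Df t x u).mulVecLin.toContinuousLinearMap x) :
    (∀ t ∈ Icc (0:ℝ) T, ∀ (x : Fin n → ℝ), ∀ u ∈ U, logNorm N (Df t x u) ≤ -c) ↔
      (∀ (x : ℝ → (Fin n → ℝ)) (u : ℝ → (Fin k → ℝ)), (∀ t, u t ∈ U) →
        ∀ t ∈ Icc (0:ℝ) T,
          logNorm (dualNorm N) (Df (T - t) (x (T - t)) (u (T - t)))ᵀ ≤ -c) := by
  constructor
  · intro h x u hu t ht
    have hmem : T - t ∈ Icc (0:ℝ) T := ⟨by linarith [ht.2], by linarith [ht.1]⟩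
    rw [logNorm_transpose hN]
    exact h _ hmem _ _ (hu _)
  · intro h t ht x u hu
    have hmem : T - t ∈ Icc (0:ℝ) T := ⟨by linarith [ht.2], by linarith [ht.1]⟩
    have h2 := h (fun _ => x) (fun _ => u) (fun _ => hu) (T - t) hmem
    rw [logNorm_transpose hN] at h2
    simpa [sub_sub_cancel] using h2
end

section
/- Let c > 0, T > 0, 0 ≤ t ≤ T, and let g : [0,T] → ℝ≥0 be integrable. Then ∫_t^T ∫_0^τ e^{−c(τ−t)} e^{−c(τ−τ′)} g(τ′) dτ′ dτ = (sinh(c(T−t))/c) ∫_0^t e^{−c(T−τ)} g(τ) dτ + (e^{−c(T−t)}/c) ∫_t^T sinh(c(T−τ)) g(τ) dτ. -/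
open Set MeasureTheory intervalIntegral

private lemma exp_mul_integral (k a b : ℝ) (hk : k ≠ 0) :
    ∫ x in a..b, Real.exp (k * x) = (Real.exp (k * b) - Real.exp (k * a)) / k := by
  have h := intervalIntegral.integral_comp_mul_left (fun x => Real.exp x) hk (a := a) (b := b)
  simp only [integral_exp, smul_eq_mul] at h
  rw [h]
  field_simp

/-- **Exchange-of-integration identity** (used in the proof of Theorem 3).
For `c > 0`, `T > 0`, `0 ≤ t ≤ T`, and `g : [0,T] → ℝ≥0` integrable,
`∫_t^T ∫_0^τ e^{−c(τ−t)} e^{−c(τ−τ′)} g(τ′) dτ′ dτ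
  = (sinh(c(T−t))/c) ∫_0^t e^{−c(T−τ)} g(τ) dτ
  + (e^{−c(T−t)}/c) ∫_t^T sinh(c(T−τ)) g(τ) dτ`. -/
theorem double_integral_identity
    (c T t : ℝ) (hc : 0 < c) (hT : 0 < T) (ht0 : 0 ≤ t) (htT : t ≤ T)
    (g : ℝ → ℝ) (hg_nonneg : ∀ τ ∈ Icc (0:ℝ) T, 0 ≤ g τ)
    (hg_int : IntegrableOn g (Icc (0:ℝ) T)) :
    (∫ τ in t..T, ∫ τ' in (0:ℝ)..τ,
        Real.exp (-c * (τ - t)) * Real.exp (-c * (τ - τ')) * g τ') =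
      (Real.sinh (c * (T - t)) / c) * (∫ τ in (0:ℝ)..t, Real.exp (-c * (T - τ)) * g τ) +
      (Real.exp (-c * (T - t)) / c) * (∫ τ in t..T, Real.sinh (c * (T - τ)) * g τ) := by
  set F : ℝ → ℝ → ℝ := fun τ s =>
    if s ≤ τ then Real.exp (c * (t - 2 * τ)) * (Real.exp (c * s) * g s) else 0 with hFdef
  set H : ℝ → ℝ := fun s =>
    Real.exp (c * t) * ((Real.exp (-2 * c * max t s) - Real.exp (-2 * c * T)) / (2 * c)) *
      (Real.exp (c * s) * g s) with hHdef
  have hgI : IntegrableOn g (Ioc (0:ℝ) T) := hg_int.mono_set Ioc_subset_Icc_self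
  -- Step A : LHS as iterated set integral of F
  have stepA : (∫ τ in t..T, ∫ τ' in (0:ℝ)..τ,
        Real.exp (-c * (τ - t)) * Real.exp (-c * (τ - τ')) * g τ')
      = ∫ τ in Ioc t T, ∫ s in Ioc (0:ℝ) T, F τ s := by
    rw [intervalIntegral.integral_of_le htT]
    refine setIntegral_congr_fun measurableSet_Ioc (fun τ hτ => ?_)
    have h0τ : (0:ℝ) ≤ τ := le_trans ht0 hτ.1.le
    rw [intervalIntegral.integral_of_le h0τ]
    have heq : ∀ s ∈ Ioc (0:ℝ) T, F τ s
        = (Ioc (0:ℝ) τ).indicator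
            (fun s => Real.exp (-c * (τ - t)) * Real.exp (-c * (τ - s)) * g s) s := by
      intro s hs
      by_cases h : s ≤ τ
      · rw [indicator_of_mem (mem_Ioc.mpr ⟨hs.1, h⟩)]
        simp only [F, if_pos h, ← mul_assoc, ← Real.exp_add]
        ring_nf
      · rw [indicator_of_notMem (by simp [mem_Ioc, h]), hFdef]
        simp [h]
    rw [setIntegral_congr_fun measurableSet_Ioc heq,
      setIntegral_indicator measurableSet_Ioc,
      Set.Ioc_inter_Ioc, max_self, min_eq_right hτ.2]
  -- Step B : Fubini
  have hFint : Integrable (Function.uncurry F)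
      ((volume.restrict (Ioc t T)).prod (volume.restrict (Ioc (0:ℝ) T))) := by
    have hgae : AEStronglyMeasurable g (volume.restrict (Ioc (0:ℝ) T)) := hgI.aestronglyMeasurable
    have hmeas : AEStronglyMeasurable (Function.uncurry F)
        ((volume.restrict (Ioc t T)).prod (volume.restrict (Ioc (0:ℝ) T))) := by
      have h1 : AEStronglyMeasurable
          (fun p : ℝ × ℝ => Real.exp (c * (t - 2 * p.1)) * (Real.exp (c * p.2) * g p.2))
          ((volume.restrict (Ioc t T)).prod (volume.restrict (Ioc (0:ℝ) T))) := by
        refine AEStronglyMeasurable.mul ?_ ?_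
        · exact (Real.continuous_exp.comp (by fun_prop)).aestronglyMeasurable
        · exact ((Real.continuous_exp.comp (by fun_prop :
              Continuous fun s : ℝ => c * s)).aestronglyMeasurable.mul hgae).comp_snd
      have heq : Function.uncurry F = {p : ℝ × ℝ | p.2 ≤ p.1}.indicator
          (fun p => Real.exp (c * (t - 2 * p.1)) * (Real.exp (c * p.2) * g p.2)) := by
        funext p
        by_cases h : p.2 ≤ p.1
        · simp [Function.uncurry, F, h, indicator_of_mem, mem_setOf_eq]
        · simp [Function.uncurry, F, h, mem_setOf_eq]
      rw [heq]
      exact h1.indicator (measurableSet_le measurable_snd measurable_fst)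
    have hb : Integrable (fun p : ℝ × ℝ => (1:ℝ) * (Real.exp (c * T) * ‖g p.2‖))
        ((volume.restrict (Ioc t T)).prod (volume.restrict (Ioc (0:ℝ) T))) :=
      (integrable_const (1:ℝ)).mul_prod (hgI.norm.const_mul _)
    have hmem : ∀ᵐ p ∂((volume.restrict (Ioc t T)).prod (volume.restrict (Ioc (0:ℝ) T))),
        p ∈ (Ioc t T) ×ˢ (Ioc (0:ℝ) T) := by
      rw [Measure.prod_restrict]
      exact ae_restrict_mem (measurableSet_Ioc.prod measurableSet_Ioc)
    refine hb.mono' hmeas ?_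
    filter_upwards [hmem] with p hp
    obtain ⟨hp1, hp2⟩ := hp
    simp only [Function.uncurry, hFdef]
    split_ifs with h
    · rw [norm_mul, norm_mul, Real.norm_eq_abs, Real.norm_eq_abs, abs_of_pos (Real.exp_pos _),
        abs_of_pos (Real.exp_pos _), one_mul]
      have h1 : Real.exp (c * (t - 2 * p.1)) ≤ 1 := by
        rw [← Real.exp_zero]
        apply Real.exp_le_exp.mpr
        nlinarith [hp1.1, hc.le, ht0]
      have h2 : Real.exp (c * p.2) ≤ Real.exp (c * T) := by
        apply Real.exp_le_exp.mpr
        nlinarith [hp2.2, hc.le]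
      calc Real.exp (c * (t - 2 * p.1)) * (Real.exp (c * p.2) * ‖g p.2‖)
          ≤ 1 * (Real.exp (c * T) * ‖g p.2‖) := by
            gcongr
        _ = Real.exp (c * T) * ‖g p.2‖ := one_mul _
    · simp only [norm_zero, one_mul]
      positivity
  have stepB : (∫ τ in Ioc t T, ∫ s in Ioc (0:ℝ) T, F τ s)
      = ∫ s in Ioc (0:ℝ) T, ∫ τ in Ioc t T, F τ s := integral_integral_swap hFint
  -- Step C : compute inner integral
  have key : ∀ a b : ℝ, a ≤ b → (∫ τ in Ioc a b, Real.exp (c * (t - 2 * τ)))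
      = Real.exp (c * t) * ((Real.exp (-2 * c * a) - Real.exp (-2 * c * b)) / (2 * c)) := by
    intro a b hab
    rw [← intervalIntegral.integral_of_le hab]
    have hτ : ∀ τ : ℝ, Real.exp (c * (t - 2 * τ)) = Real.exp (c * t) * Real.exp (-2 * c * τ) := by
      intro τ; rw [← Real.exp_add]; ring_nf
    simp_rw [hτ]
    rw [intervalIntegral.integral_const_mul,
      exp_mul_integral (-2 * c) a b (by nlinarith)]
    have h2c : (2:ℝ) * c ≠ 0 := by positivity
    field_simp
    ring
  have stepC : ∀ s ∈ Ioc (0:ℝ) T, (∫ τ in Ioc t T, F τ s) = H s := by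
    intro s hs
    have heq : ∀ τ ∈ Ioc t T, F τ s
        = (Ici s).indicator (fun τ => Real.exp (c * (t - 2 * τ))) τ
            * (Real.exp (c * s) * g s) := by
      intro τ _
      by_cases h : s ≤ τ
      · simp [F, h, indicator_of_mem, mem_Ici]
      · simp [F, h, indicator_of_notMem, mem_Ici]
    rw [setIntegral_congr_fun measurableSet_Ioc heq, MeasureTheory.integral_mul_const,
      setIntegral_indicator measurableSet_Ici]
    rcases le_or_gt s t with hst | hst
    · have hset : Ioc t T ∩ Ici s = Ioc t T :=
        inter_eq_left.mpr fun τ hτ => le_trans hst hτ.1.le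
      rw [hset, key t T htT, hHdef]
      simp only [max_eq_left hst]
    · have hset : Ioc t T ∩ Ici s = Icc s T := by
        ext τ
        simp only [mem_inter_iff, mem_Ioc, mem_Icc, mem_Ici]
        constructor
        · rintro ⟨⟨_, h2⟩, h3⟩; exact ⟨h3, h2⟩
        · rintro ⟨h1, h2⟩; exact ⟨⟨lt_of_lt_of_le hst h1, h2⟩, h1⟩
      rw [hset, integral_Icc_eq_integral_Ioc, key s T hs.2, hHdef]
      simp only [max_eq_right hst.le]
  -- integrability of H
  have hHint : IntegrableOn H (Ioc (0:ℝ) T) := by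
    refine Integrable.mono'
      (hgI.norm.const_mul (Real.exp (c * t) * Real.exp (c * T) / c)) ?_ ?_
    · have hφ : Continuous fun s : ℝ => Real.exp (c * t)
          * ((Real.exp (-2 * c * max t s) - Real.exp (-2 * c * T)) / (2 * c))
          * Real.exp (c * s) := by fun_prop
      have hfe : (fun s => (Real.exp (c * t)
          * ((Real.exp (-2 * c * max t s) - Real.exp (-2 * c * T)) / (2 * c))
          * Real.exp (c * s)) * g s) = H := by
        funext s; rw [hHdef]; ring
      rw [← hfe]
      exact hφ.aestronglyMeasurable.mul hgI.aestronglyMeasurable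
    · filter_upwards [ae_restrict_mem measurableSet_Ioc] with s hs
      have hd : |Real.exp (-2 * c * max t s) - Real.exp (-2 * c * T)| ≤ 2 := by
        have h1 : Real.exp (-2 * c * max t s) ≤ 1 := by
          rw [← Real.exp_zero]
          apply Real.exp_le_exp.mpr
          have : (0:ℝ) ≤ max t s := le_trans ht0 (le_max_left _ _)
          nlinarith
        have h2 : Real.exp (-2 * c * T) ≤ 1 := by
          rw [← Real.exp_zero]
          apply Real.exp_le_exp.mpr
          nlinarith
        rw [abs_sub_le_iff]
        constructor <;> nlinarith [Real.exp_pos (-2 * c * max t s), Real.exp_pos (-2 * c * T)]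
      rw [hHdef]
      simp only [Real.norm_eq_abs, abs_mul, abs_div]
      rw [abs_of_pos (Real.exp_pos (c * t)), abs_of_pos (Real.exp_pos (c * s)),
        (by norm_num : |(2:ℝ)| = 2), abs_of_pos hc]
      calc Real.exp (c * t) * (|Real.exp (-2 * c * max t s) - Real.exp (-2 * c * T)| / (2 * c))
            * (Real.exp (c * s) * |g s|)
          ≤ Real.exp (c * t) * (2 / (2 * c)) * (Real.exp (c * T) * |g s|) := by
            gcongr
            exact hs.2
        _ = Real.exp (c * t) * Real.exp (c * T) / c * ‖g s‖ := by
            rw [Real.norm_eq_abs]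
            field_simp
  -- Step D : split and identify with RHS
  have stepD1 : (∫ s in Ioc (0:ℝ) t, H s)
      = (Real.sinh (c * (T - t)) / c) * (∫ τ in (0:ℝ)..t, Real.exp (-c * (T - τ)) * g τ) := by
    rw [intervalIntegral.integral_of_le ht0, ← MeasureTheory.integral_const_mul]
    refine setIntegral_congr_fun measurableSet_Ioc (fun s hs => ?_)
    rw [hHdef]
    simp only [max_eq_left hs.2]
    rw [Real.sinh_eq]
    have e1 : Real.exp (c * t) * Real.exp (-2 * c * t) * Real.exp (c * s)
        = Real.exp (c * (T - t)) * Real.exp (-c * (T - s)) := by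
      rw [← Real.exp_add, ← Real.exp_add, ← Real.exp_add]; ring_nf
    have e2 : Real.exp (c * t) * Real.exp (-2 * c * T) * Real.exp (c * s)
        = Real.exp (-(c * (T - t))) * Real.exp (-c * (T - s)) := by
      rw [← Real.exp_add, ← Real.exp_add, ← Real.exp_add]; ring_nf
    linear_combination (g s / (2 * c)) * e1 - (g s / (2 * c)) * e2
  have stepD2 : (∫ s in Ioc t T, H s)
      = (Real.exp (-c * (T - t)) / c) * (∫ τ in t..T, Real.sinh (c * (T - τ)) * g τ) := by
    rw [intervalIntegral.integral_of_le htT, ← MeasureTheory.integral_const_mul]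
    refine setIntegral_congr_fun measurableSet_Ioc (fun s hs => ?_)
    rw [hHdef]
    simp only [max_eq_right hs.1.le]
    rw [Real.sinh_eq]
    have e1 : Real.exp (c * t) * Real.exp (-2 * c * s) * Real.exp (c * s)
        = Real.exp (-c * (T - t)) * Real.exp (c * (T - s)) := by
      rw [← Real.exp_add, ← Real.exp_add, ← Real.exp_add]; ring_nf
    have e2 : Real.exp (c * t) * Real.exp (-2 * c * T) * Real.exp (c * s)
        = Real.exp (-c * (T - t)) * Real.exp (-(c * (T - s))) := by
      rw [← Real.exp_add, ← Real.exp_add, ← Real.exp_add]; ring_nf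
    linear_combination (g s / (2 * c)) * e1 - (g s / (2 * c)) * e2
  calc (∫ τ in t..T, ∫ τ' in (0:ℝ)..τ,
        Real.exp (-c * (τ - t)) * Real.exp (-c * (τ - τ')) * g τ')
      = ∫ s in Ioc (0:ℝ) T, ∫ τ in Ioc t T, F τ s := by rw [stepA, stepB]
    _ = ∫ s in Ioc (0:ℝ) T, H s := setIntegral_congr_fun measurableSet_Ioc stepC
    _ = (∫ s in Ioc (0:ℝ) t, H s) + ∫ s in Ioc t T, H s := by
        rw [← setIntegral_union (Ioc_disjoint_Ioc_of_le le_rfl) measurableSet_Ioc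
          (hHint.mono_set (Ioc_subset_Ioc_right htT)) (hHint.mono_set (Ioc_subset_Ioc_left ht0)),
          Ioc_union_Ioc_eq_Ioc ht0 htT]
    _ = _ := by rw [stepD1, stepD2]
end

section
/- Let c > 0, T > 0, and 0 ≤ t ≤ T. Then (sinh(c(T−t))/c) ∫_0^t e^{−c(T−τ)} dτ + (e^{−c(T−t)}/c) ∫_t^T sinh(c(T−τ)) dτ ≤ κ², where κ = c⁻¹(1 − e^{−cT}). -/
open Set MeasureTheory intervalIntegral

lemma kb_int1 (c T : ℝ) (hc : 0 < c) (t : ℝ) :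
    (∫ τ in (0:ℝ)..t, Real.exp (-c * (T - τ))) =
      (Real.exp (-c * (T - t)) - Real.exp (-c * T)) / c := by
  have h : ∀ τ : ℝ, HasDerivAt (fun τ => Real.exp (-c * (T - τ)) / c)
      (Real.exp (-c * (T - τ))) τ := by
    intro τ
    have h1 : HasDerivAt (fun τ : ℝ => -c * (T - τ)) c τ := by
      have := (hasDerivAt_id τ).const_sub T
      have := this.const_mul (-c)
      simpa using this
    have := (h1.exp).div_const c
    simpa [mul_div_assoc, mul_div_cancel_right₀, hc.ne'] using this
  rw [intervalIntegral.integral_eq_sub_of_hasDerivAt (fun τ _ => h τ)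
    (by apply Continuous.intervalIntegrable; continuity)]
  ring_nf

lemma kb_int2 (c T : ℝ) (hc : 0 < c) (t : ℝ) :
    (∫ τ in t..T, Real.sinh (c * (T - τ))) =
      (Real.cosh (c * (T - t)) - 1) / c := by
  have h : ∀ τ : ℝ, HasDerivAt (fun τ => -Real.cosh (c * (T - τ)) / c)
      (Real.sinh (c * (T - τ))) τ := by
    intro τ
    have h1 : HasDerivAt (fun τ : ℝ => c * (T - τ)) (-c) τ := by
      have := ((hasDerivAt_id τ).const_sub T).const_mul c
      simpa using this
    have h2 := (h1.cosh).neg.div_const c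
    have hne : c ≠ 0 := hc.ne'
    have heq : -(Real.sinh (c * (T - τ)) * -c) / c = Real.sinh (c * (T - τ)) := by
      field_simp
    rw [heq] at h2
    exact h2
  rw [intervalIntegral.integral_eq_sub_of_hasDerivAt (fun τ _ => h τ)
    (by apply Continuous.intervalIntegrable; continuity)]
  simp [Real.cosh_zero]
  ring

/-- **Kernel bound** (used in the proof of Corollary 1).  For `c > 0`, `T > 0`, and
`0 ≤ t ≤ T`,
`(sinh(c(T−t))/c) ∫_0^t e^{−c(T−τ)} dτ + (e^{−c(T−t)}/c) ∫_t^T sinh(c(T−τ)) dτ ≤ κ²`,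
where `κ = c⁻¹ (1 − e^{−cT})`. -/
theorem kernel_bound
    (c T t : ℝ) (hc : 0 < c) (hT : 0 < T) (ht0 : 0 ≤ t) (htT : t ≤ T) :
    (Real.sinh (c * (T - t)) / c) * (∫ τ in (0:ℝ)..t, Real.exp (-c * (T - τ))) +
      (Real.exp (-c * (T - t)) / c) * (∫ τ in t..T, Real.sinh (c * (T - τ))) ≤
      (c⁻¹ * (1 - Real.exp (-(c * T))))^2 := by
  rw [kb_int1 c T hc t, kb_int2 c T hc t]
  set a := c * (T - t) with ha
  have hxu : Real.exp (-c * T) = Real.exp (-(c * T)) := by ring_nf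
  rw [hxu]
  set x := Real.exp (-(c * T)) with hx
  set u := Real.exp (-a) with hu
  have hexpa : Real.exp a = u⁻¹ := by
    rw [hu, ← Real.exp_neg, neg_neg]
  have hma : -c * (T - t) = -a := by ring
  rw [Real.sinh_eq, Real.cosh_eq, hma, ← hu, hexpa]
  have hupos : 0 < u := Real.exp_pos _
  have hxpos : 0 < x := Real.exp_pos _
  have hx1 : x < 1 := by
    rw [hx]
    have : -(c * T) < 0 := by nlinarith
    calc Real.exp (-(c*T)) < Real.exp 0 := Real.exp_lt_exp.2 this
    _ = 1 := Real.exp_zero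
  have key : 0 ≤ (2 - x) * (u - x)^2 + x * (1 - x)^2 := by nlinarith
  have hcne : c ≠ 0 := hc.ne'
  have hune : u ≠ 0 := hupos.ne'
  rw [show ((u⁻¹ - u) / 2 / c * ((u - x) / c) + u / c * (((u⁻¹ + u) / 2 - 1) / c))
      = ((u⁻¹ - u) / 2 * (u - x) + u * ((u⁻¹ + u) / 2 - 1)) / c^2 by ring,
    show (c⁻¹ * (1 - x))^2 = (1 - x)^2 / c^2 by ring,
    div_le_div_iff_of_pos_right (by positivity : (0:ℝ) < c^2),
    ← sub_nonneg]
  have hexp : (1 - x)^2 - ((u⁻¹ - u) / 2 * (u - x) + u * ((u⁻¹ + u) / 2 - 1))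
      = ((2 - x) * (u - x)^2 + x * (1 - x)^2) / (2 * u) := by
    field_simp
    ring
  rw [hexp]
  positivity
end
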